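/- arXiv:math/0401367 — 2 statements merged into one kernel-verified Lean document; each statement's English description precedes it below -/
import Mathlib

section
/- Let $V$ be a finite-dimensional vector space with subspaces $W_1 \subseteq \cdots \subseteq W_I \subseteq V$. Define $K \subseteq \bigoplus_{i=1}^I \mathrm{Hom}(W_i, V/W_i)$ as the kernel of the map $(\varphi_i)_i \mapsto (p_{i+1} \circ \varphi_i - \varphi_{i+1} \circ j_i)_{i=1}^{I-1}$, where $j_i : W_i \hookrightarrow W_{i+1}$ and $p_{i+1} : V/W_i \to V/W_{i+1}$. Let $G \subseteq \bigoplus_{i=1}^I \mathrm{Hom}(W_i, V)$ (with $W_{I+1} := V$) be the subspace of tuples $(\psi_i)_i$ such that $(\psi_i - \psi_{i+1} \circ j_i)(W_i) \subseteq W_{i+1}$ for $1 \le i \le I-1$. Then the map $\Psi : G \to K$, $(\psi_i)_i \mapsto (p_i \circ \psi_i)_i$, is a well-defined surjection with kernel $\bigoplus_{i=1}^I \mathrm{Hom}(W_i, W_i)$ (embedded via $\psi_i = $ maps landing in $W_i$), so $\dim K = \dim G - \sum_{i=1}^I (\dim W_i)^2$. -/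
set_option synthInstance.maxHeartbeats 1000000
set_option maxHeartbeats 1000000

/-- For a chain `W₁ ⊆ ⋯ ⊆ W_I ⊆ V = ℂⁿ`, the space `K` of tuples
`(φᵢ : Wᵢ → V/Wᵢ)ᵢ` satisfying `p_{i+1} ∘ φᵢ = φ_{i+1} ∘ jᵢ`. -/
noncomputable def Kspace (n I : ℕ) (W : Fin I → Submodule ℂ (Fin n → ℂ)) (hW : Monotone W) :
    Submodule ℂ (∀ i : Fin I, (↥(W i) →ₗ[ℂ] ((Fin n → ℂ) ⧸ W i))) where
  carrier := {φ | ∀ (i : Fin I) (h : (i : ℕ) + 1 < I),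
    (Submodule.mapQ (W i) (W ⟨(i : ℕ) + 1, h⟩) LinearMap.id
        (fun _ hx => hW (Fin.le_def.mpr (Nat.le_succ _)) hx)).comp (φ i) =
      (φ ⟨(i : ℕ) + 1, h⟩).comp
        (Submodule.inclusion (hW (Fin.le_def.mpr (Nat.le_succ _))))}
  add_mem' := by
    intro a b ha hb i h
    simp only [Pi.add_apply, LinearMap.comp_add, LinearMap.add_comp, ha i h, hb i h]
  zero_mem' := by
    intro i h
    simp only [Pi.zero_apply, LinearMap.comp_zero, LinearMap.zero_comp]
  smul_mem' := by
    intro c f hf i h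
    simp only [Pi.smul_apply, LinearMap.comp_smul, LinearMap.smul_comp, hf i h]

/-- For a chain `W₁ ⊆ ⋯ ⊆ W_I ⊆ V = ℂⁿ`, the space `G` of tuples
`(ψᵢ : Wᵢ → V)ᵢ` such that `(ψᵢ - ψ_{i+1} ∘ jᵢ)(Wᵢ) ⊆ W_{i+1}`. -/
noncomputable def Gspace (n I : ℕ) (W : Fin I → Submodule ℂ (Fin n → ℂ)) (hW : Monotone W) :
    Submodule ℂ (∀ i : Fin I, (↥(W i) →ₗ[ℂ] (Fin n → ℂ))) where
  carrier := {ψ | ∀ (i : Fin I) (h : (i : ℕ) + 1 < I) (x : ↥(W i)),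
    ψ i x - ψ ⟨(i : ℕ) + 1, h⟩
        (Submodule.inclusion (hW (Fin.le_def.mpr (Nat.le_succ _))) x) ∈
      W ⟨(i : ℕ) + 1, h⟩}
  add_mem' := by
    intro a b ha hb i h x
    have := Submodule.add_mem _ (ha i h x) (hb i h x)
    simpa [add_sub_add_comm] using this
  zero_mem' := by
    intro i h x
    simp
  smul_mem' := by
    intro c f hf i h x
    have := Submodule.smul_mem _ c (hf i h x)
    simpa [smul_sub] using this

/-- Compatibility of quotient maps. -/
lemma mkQ_mapQ {n : ℕ} (p q : Submodule ℂ (Fin n → ℂ)) (hle : p ≤ q) (v : Fin n → ℂ) :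
    Submodule.mapQ p q LinearMap.id (fun _ hx => hle hx) (p.mkQ v) = q.mkQ v := by
  simp [Submodule.mapQ_apply]

/-- Part 1: well-definedness of `Ψ`. -/
lemma mem_Kspace_of_mem_Gspace (n I : ℕ) (W : Fin I → Submodule ℂ (Fin n → ℂ))
    (hW : Monotone W) (ψ : ∀ i : Fin I, (↥(W i) →ₗ[ℂ] (Fin n → ℂ)))
    (hψ : ψ ∈ Gspace n I W hW) :
    (fun i => ((W i).mkQ).comp (ψ i)) ∈ Kspace n I W hW := by
  intro i h
  ext x
  simp only [LinearMap.comp_apply]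
  rw [mkQ_mapQ (W i) (W ⟨(i : ℕ) + 1, h⟩) (hW (Fin.le_def.mpr (Nat.le_succ _)))]
  simp only [Submodule.mkQ_apply]
  rw [Submodule.Quotient.eq]
  exact hψ i h x

/-- Membership of lifts in `G`. -/
lemma lift_mem_Gspace (n I : ℕ) (W : Fin I → Submodule ℂ (Fin n → ℂ)) (hW : Monotone W)
    (s : ∀ i : Fin I, ((Fin n → ℂ) ⧸ W i) →ₗ[ℂ] (Fin n → ℂ))
    (hs : ∀ i, ((W i).mkQ).comp (s i) = LinearMap.id)
    (φ : ∀ i : Fin I, (↥(W i) →ₗ[ℂ] ((Fin n → ℂ) ⧸ W i))) (hφ : φ ∈ Kspace n I W hW)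
    (f : ∀ i : Fin I, (↥(W i) →ₗ[ℂ] ↥(W i))) :
    (fun i => (s i).comp (φ i) + ((W i).subtype).comp (f i)) ∈ Gspace n I W hW := by
  have h1 : ∀ (j : Fin I) (v : (Fin n → ℂ) ⧸ W j), (W j).mkQ (s j v) = v :=
    fun j v => LinearMap.congr_fun (hs j) v
  intro i h x
  have hf1 : (((W i).subtype).comp (f i)) x ∈ W ⟨(i : ℕ) + 1, h⟩ :=
    hW (Fin.le_def.mpr (Nat.le_succ _)) (f i x).2
  have hf2 : (((W ⟨(i : ℕ) + 1, h⟩).subtype).comp (f ⟨(i : ℕ) + 1, h⟩))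
      (Submodule.inclusion (hW (Fin.le_def.mpr (Nat.le_succ _))) x) ∈ W ⟨(i : ℕ) + 1, h⟩ :=
    (f ⟨(i : ℕ) + 1, h⟩ _).2
  have hsφ : s i (φ i x) - s ⟨(i : ℕ) + 1, h⟩
      (φ ⟨(i : ℕ) + 1, h⟩ (Submodule.inclusion (hW (Fin.le_def.mpr (Nat.le_succ _))) x)) ∈
      W ⟨(i : ℕ) + 1, h⟩ := by
    apply (Submodule.Quotient.eq _).mp
    have key := LinearMap.congr_fun (hφ i h) x
    simp only [LinearMap.comp_apply] at key
    calc (Submodule.Quotient.mk (s i (φ i x)) : _ ⧸ W ⟨(i : ℕ) + 1, h⟩)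
        = (W ⟨(i : ℕ) + 1, h⟩).mkQ (s i (φ i x)) := rfl
      _ = Submodule.mapQ (W i) (W ⟨(i : ℕ) + 1, h⟩) LinearMap.id
            (fun _ hx => hW (Fin.le_def.mpr (Nat.le_succ _)) hx)
            ((W i).mkQ (s i (φ i x))) := by rw [mkQ_mapQ]
      _ = Submodule.mapQ (W i) (W ⟨(i : ℕ) + 1, h⟩) LinearMap.id
            (fun _ hx => hW (Fin.le_def.mpr (Nat.le_succ _)) hx) (φ i x) := by rw [h1]
      _ = φ ⟨(i : ℕ) + 1, h⟩ (Submodule.inclusion (hW (Fin.le_def.mpr (Nat.le_succ _))) x) :=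
          key
      _ = (W ⟨(i : ℕ) + 1, h⟩).mkQ (s ⟨(i : ℕ) + 1, h⟩
            (φ ⟨(i : ℕ) + 1, h⟩ (Submodule.inclusion (hW (Fin.le_def.mpr (Nat.le_succ _))) x)))
          := (h1 _ _).symm
      _ = _ := rfl
  have := Submodule.add_mem _ hsφ (Submodule.sub_mem _ hf1 hf2)
  simp only [LinearMap.add_apply, LinearMap.comp_apply] at this ⊢
  convert this using 1
  abel

/-- The splitting equivalence `G ≃ K × ∏ᵢ End(Wᵢ)`. -/
noncomputable def splitEquiv (n I : ℕ) (W : Fin I → Submodule ℂ (Fin n → ℂ)) (hW : Monotone W)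
    (s : ∀ i : Fin I, ((Fin n → ℂ) ⧸ W i) →ₗ[ℂ] (Fin n → ℂ))
    (hs : ∀ i, ((W i).mkQ).comp (s i) = LinearMap.id) :
    ↥(Gspace n I W hW) ≃ₗ[ℂ]
      ↥(Kspace n I W hW) × (∀ i : Fin I, (↥(W i) →ₗ[ℂ] ↥(W i))) := by
  have h1 : ∀ (j : Fin I) (v : (Fin n → ℂ) ⧸ W j), (W j).mkQ (s j v) = v :=
    fun j v => LinearMap.congr_fun (hs j) v
  have hmem : ∀ (ψ : ∀ i : Fin I, (↥(W i) →ₗ[ℂ] (Fin n → ℂ))) (i : Fin I) (x : ↥(W i)),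
      (ψ i - (s i).comp (((W i).mkQ).comp (ψ i))) x ∈ W i := by
    intro ψ i x
    rw [← Submodule.Quotient.mk_eq_zero (W i)]
    simp only [LinearMap.sub_apply, LinearMap.comp_apply]
    rw [Submodule.Quotient.mk_sub]
    change (W i).mkQ _ - (W i).mkQ _ = 0
    rw [h1, sub_self]
  refine LinearEquiv.ofLinear
    { toFun := fun ψ =>
        (⟨fun i => ((W i).mkQ).comp (ψ.1 i),
          mem_Kspace_of_mem_Gspace n I W hW ψ.1 ψ.2⟩,
         fun i => LinearMap.codRestrict (W i)
           (ψ.1 i - (s i).comp (((W i).mkQ).comp (ψ.1 i))) (hmem ψ.1 i))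
      map_add' := ?_
      map_smul' := ?_ }
    { toFun := fun p =>
        ⟨fun i => (s i).comp (p.1.1 i) + ((W i).subtype).comp (p.2 i),
         lift_mem_Gspace n I W hW s hs p.1.1 p.1.2 p.2⟩
      map_add' := ?_
      map_smul' := ?_ }
    ?_ ?_
  · intro a b
    refine Prod.ext (Subtype.ext (funext fun i => ?_)) (funext fun i => ?_)
    · apply LinearMap.ext; intro x; simp
    · apply LinearMap.ext; intro x; apply Subtype.ext
      show _ = (_ : Fin n → ℂ) + _
      simp only [LinearMap.codRestrict_apply, LinearMap.sub_apply, LinearMap.comp_apply,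
        LinearMap.add_apply, map_add, Submodule.coe_add, Pi.add_apply]
      abel
  · intro c a
    refine Prod.ext (Subtype.ext (funext fun i => ?_)) (funext fun i => ?_)
    · apply LinearMap.ext; intro x; simp
    · apply LinearMap.ext; intro x; apply Subtype.ext
      show _ = (c • _ : Fin n → ℂ)
      simp only [LinearMap.codRestrict_apply, LinearMap.sub_apply, LinearMap.comp_apply,
        LinearMap.smul_apply, map_smul, SetLike.val_smul, Pi.smul_apply, smul_sub]
  · intro a b
    refine Subtype.ext (funext fun i => ?_)
    apply LinearMap.ext; intro x
    show _ = _ + (_ : Fin n → ℂ)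
    simp only [LinearMap.add_apply, LinearMap.comp_apply, map_add, Submodule.coe_add,
      Prod.fst_add, Prod.snd_add, Pi.add_apply]
    abel
  · intro c a
    refine Subtype.ext (funext fun i => ?_)
    apply LinearMap.ext; intro x
    show _ = c • (_ : Fin n → ℂ)
    simp only [LinearMap.add_apply, LinearMap.comp_apply, map_smul, SetLike.val_smul,
      Prod.smul_fst, Prod.smul_snd, Pi.smul_apply, LinearMap.smul_apply, smul_add]
  · -- toL ∘ invL = id
    apply LinearMap.ext; intro p
    refine Prod.ext (Subtype.ext (funext fun i => ?_)) (funext fun i => ?_)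
    · apply LinearMap.ext; intro x
      simp only [LinearMap.comp_apply, LinearMap.coe_mk, AddHom.coe_mk, LinearMap.id_apply,
        LinearMap.add_apply]
      change (W i).mkQ (s i (p.1.1 i x) + (p.2 i x : Fin n → ℂ)) = p.1.1 i x
      have h0 : (W i).mkQ (p.2 i x : Fin n → ℂ) = 0 :=
        (Submodule.Quotient.mk_eq_zero (W i)).mpr (p.2 i x).2
      rw [map_add, h1, h0, add_zero]
    · apply LinearMap.ext; intro x
      apply Subtype.ext
      simp only [LinearMap.comp_apply, LinearMap.coe_mk, AddHom.coe_mk, LinearMap.id_apply]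
      change ((s i).comp (p.1.1 i) + ((W i).subtype).comp (p.2 i)) x -
          s i ((W i).mkQ (((s i).comp (p.1.1 i) + ((W i).subtype).comp (p.2 i)) x)) =
        (p.2 i x : Fin n → ℂ)
      simp only [LinearMap.add_apply, LinearMap.comp_apply, map_add, h1]
      have h0 : (W i).mkQ ((W i).subtype (p.2 i x)) = 0 :=
        (Submodule.Quotient.mk_eq_zero (W i)).mpr (p.2 i x).2
      rw [h0]
      simp
  · -- invL ∘ toL = id
    apply LinearMap.ext; intro ψ
    refine Subtype.ext (funext fun i => ?_)
    apply LinearMap.ext; intro x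
    simp only [LinearMap.comp_apply, LinearMap.coe_mk, AddHom.coe_mk, LinearMap.id_apply]
    change s i ((W i).mkQ (ψ.1 i x)) +
        ((ψ.1 i - (s i).comp (((W i).mkQ).comp (ψ.1 i))) x : Fin n → ℂ) = ψ.1 i x
    simp only [LinearMap.sub_apply, LinearMap.comp_apply]
    abel

/-- The map `Ψ : G → K`, `(ψᵢ)ᵢ ↦ (pᵢ ∘ ψᵢ)ᵢ`, is a well-defined surjection with kernel
`⨁ᵢ Hom(Wᵢ, Wᵢ)`, so `dim K = dim G - ∑ᵢ (dim Wᵢ)²`. -/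
theorem flag_tangent_resolution
    (n I : ℕ) (W : Fin I → Submodule ℂ (Fin n → ℂ)) (hW : Monotone W) :
    (∀ ψ ∈ Gspace n I W hW,
      (fun i => ((W i).mkQ).comp (ψ i)) ∈ Kspace n I W hW) ∧
    (∀ φ ∈ Kspace n I W hW, ∃ ψ ∈ Gspace n I W hW,
      ∀ i, ((W i).mkQ).comp (ψ i) = φ i) ∧
    (∀ ψ ∈ Gspace n I W hW,
      ((∀ i, ((W i).mkQ).comp (ψ i) = 0) ↔ ∀ i, ∀ x : ↥(W i), ψ i x ∈ W i)) ∧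
    Module.finrank ℂ ↥(Kspace n I W hW) =
      Module.finrank ℂ ↥(Gspace n I W hW) - ∑ i, (Module.finrank ℂ ↥(W i)) ^ 2 := by
  have hs : ∀ i : Fin I, ∃ s, ((W i).mkQ).comp s = LinearMap.id :=
    fun i => ((W i).mkQ).exists_rightInverse_of_surjective (Submodule.range_mkQ _)
  choose s hs using hs
  have h1 : ∀ (j : Fin I) (v : (Fin n → ℂ) ⧸ W j), (W j).mkQ (s j v) = v :=
    fun j v => LinearMap.congr_fun (hs j) v
  refine ⟨mem_Kspace_of_mem_Gspace n I W hW, ?_, ?_, ?_⟩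
  · -- surjectivity
    intro φ hφ
    refine ⟨fun i => (s i).comp (φ i), ?_, ?_⟩
    · have := lift_mem_Gspace n I W hW s hs φ hφ 0
      simpa using this
    · intro i
      ext x
      simp [h1]
  · -- kernel description
    intro ψ _
    constructor
    · intro h0 i x
      have := LinearMap.congr_fun (h0 i) x
      simpa [Submodule.Quotient.mk_eq_zero] using this
    · intro hm i
      ext x
      simpa [Submodule.Quotient.mk_eq_zero] using hm i x
  · -- dimension count
    have he := LinearEquiv.finrank_eq (R := ℂ) (M := ↥(Gspace n I W hW))
      (N := ↥(Kspace n I W hW) × (∀ i : Fin I, (↥(W i) →ₗ[ℂ] ↥(W i))))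
      (splitEquiv n I W hW s hs)
    haveI : ∀ i : Fin I, Module.Free ℂ (↥(W i) →ₗ[ℂ] ↥(W i)) :=
      fun i => Module.Free.linearMap ℂ ℂ _ _
    haveI : ∀ i : Fin I, Module.Finite ℂ (↥(W i) →ₗ[ℂ] ↥(W i)) := fun i => inferInstance
    haveI : Module.Free ℂ ↥(Kspace n I W hW) := by
      letI : AddCommGroup ↥(Kspace n I W hW) :=
        @Submodule.addCommGroup ℂ (∀ i : Fin I, (↥(W i) →ₗ[ℂ] ((Fin n → ℂ) ⧸ W i))) _ _ _ _
      exact Module.Free.of_divisionRing ℂ ↥(Kspace n I W hW)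
    haveI : Module.Finite ℂ ↥(Kspace n I W hW) := by
      letI : AddCommGroup (∀ i : Fin I, (↥(W i) →ₗ[ℂ] ((Fin n → ℂ) ⧸ W i))) := inferInstance
      letI : AddCommGroup ↥(Kspace n I W hW) :=
        @Submodule.addCommGroup ℂ (∀ i : Fin I, (↥(W i) →ₗ[ℂ] ((Fin n → ℂ) ⧸ W i))) _ _ _ _
      haveI : IsNoetherian ℂ (∀ i : Fin I, (↥(W i) →ₗ[ℂ] ((Fin n → ℂ) ⧸ W i))) := inferInstance
      exact Module.Finite.of_injective (Kspace n I W hW).subtype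
        (Kspace n I W hW).injective_subtype
    rw [Module.finrank_prod, Module.finrank_pi_fintype] at he
    have hpi : ∀ i : Fin I, Module.finrank ℂ (↥(W i) →ₗ[ℂ] ↥(W i)) =
        (Module.finrank ℂ ↥(W i)) ^ 2 := by
      intro i
      rw [Module.finrank_linearMap, sq]
    rw [Finset.sum_congr rfl (fun i _ => hpi i)] at he
    omega
end

section
/- Let $n \ge 1$ and let $y_1, \ldots, y_n$ be indeterminates. For any polynomial $P \in \mathbb{Q}[y_1,\ldots,y_n]$, the expression $\sum_{\sigma \in S_n} \sigma \cdot \left( \frac{P}{\prod_{1 \le j < j' \le n} (y_{j'} - y_j)} \right)$ is a symmetric polynomial in $y_1, \ldots, y_n$ (in particular, the apparent denominators cancel). -/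
open MvPolynomial Finset

private lemma primeX {m : ℕ} (b : Fin (m+1)) : Prime (X b : MvPolynomial (Fin (m+1)) ℚ) := by
  have h0 : Prime (X (0 : Fin (m+1)) : MvPolynomial (Fin (m+1)) ℚ) := by
    rw [← MulEquiv.prime_iff (finSuccEquiv ℚ m).toMulEquiv]
    simpa [finSuccEquiv_X_zero] using Polynomial.prime_X
  rw [← MulEquiv.prime_iff (renameEquiv ℚ (Equiv.swap b 0)).toMulEquiv]
  simpa [renameEquiv_apply, rename_X] using h0

private lemma primeXsub {m : ℕ} {a b : Fin (m+1)} (hab : a ≠ b) :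
    Prime (X b - X a : MvPolynomial (Fin (m+1)) ℚ) := by
  classical
  let f : Fin (m+1) → MvPolynomial (Fin (m+1)) ℚ := fun k => if k = b then X b - X a else X k
  let g : Fin (m+1) → MvPolynomial (Fin (m+1)) ℚ := fun k => if k = b then X b + X a else X k
  have hcomp1 : (aeval f).comp (aeval g) = AlgHom.id ℚ (MvPolynomial (Fin (m+1)) ℚ) := by
    apply MvPolynomial.algHom_ext
    intro k
    by_cases hk : k = b
    · subst hk
      simp [f, g, if_neg hab]
    · simp [f, g, hk]
  have hcomp2 : (aeval g).comp (aeval f) = AlgHom.id ℚ (MvPolynomial (Fin (m+1)) ℚ) := by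
    apply MvPolynomial.algHom_ext
    intro k
    by_cases hk : k = b
    · subst hk
      simp [f, g, if_neg hab]
    · simp [f, g, hk]
  let e : MvPolynomial (Fin (m+1)) ℚ ≃ₐ[ℚ] MvPolynomial (Fin (m+1)) ℚ :=
    AlgEquiv.ofAlgHom (aeval f) (aeval g) hcomp1 hcomp2
  have := (MulEquiv.prime_iff e.toMulEquiv).mpr (primeX b)
  simpa [e, f, AlgEquiv.ofAlgHom] using this

private lemma notdvd {n : ℕ} {a b c d : Fin n} (hab : a < b) (hcd : c < d)
    (hne : (a, b) ≠ (c, d)) :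
    ¬ ((X b - X a : MvPolynomial (Fin n) ℚ) ∣ (X d - X c)) := by
  classical
  rintro ⟨g, hg⟩
  have hba : a ≠ b := hab.ne
  let s : Fin n → MvPolynomial (Fin n) ℚ := fun k => if k = b then X a else X k
  have h0 : aeval s (X d - X c : MvPolynomial (Fin n) ℚ) = 0 := by
    rw [hg, map_mul, map_sub, aeval_X, aeval_X]
    simp [s, if_neg hba]
  rw [map_sub, aeval_X, aeval_X, sub_eq_zero] at h0
  simp only [s] at h0
  by_cases hd : d = b
  · by_cases hc : c = b
    · exact absurd (hc.trans hd.symm) hcd.ne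
    · rw [if_pos hd, if_neg hc] at h0
      have := X_injective h0
      exact hne (by rw [Prod.mk.injEq]; exact ⟨this, hd.symm⟩)
  · by_cases hc : c = b
    · rw [if_neg hd, if_pos hc] at h0
      have hda := X_injective h0
      subst hda
      exact absurd (hcd.trans hab) (by rw [hc]; exact lt_irrefl b)
    · rw [if_neg hd, if_neg hc] at h0
      exact hcd.ne' (X_injective h0)

private lemma dvd_sub_aeval {n : ℕ} {i j : Fin n} (hij : i ≠ j) (A : MvPolynomial (Fin n) ℚ) :
    (X j - X i) ∣ (A - aeval (fun k => if k = i then X j else X k) A) := by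
  classical
  set s : Fin n → MvPolynomial (Fin n) ℚ := fun k => if k = i then X j else X k with hs
  induction A using MvPolynomial.induction_on with
  | C r => simp [algebraMap_eq]
  | add p q hp hq =>
      have : p + q - aeval s (p + q) = (p - aeval s p) + (q - aeval s q) := by
        rw [map_add]; ring
      rw [this]
      exact dvd_add hp hq
  | mul_X p k hp =>
      have hkey : p * X k - aeval s (p * X k)
          = (p - aeval s p) * X k + aeval s p * (X k - s k) := by
        rw [map_mul, aeval_X]; ring
      rw [hkey]
      refine dvd_add (Dvd.dvd.mul_right hp _) ?_
      by_cases hk : k = i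
      · subst hk
        have : X k - s k = -(X j - X k) := by simp [hs]
        rw [this]
        exact Dvd.dvd.mul_left (dvd_neg.mpr dvd_rfl) _
      · simp [hs, if_neg hk]

private lemma prod_primes_dvd' {α ι : Type*} [CommMonoidWithZero α] [IsCancelMulZero α] (s : Finset ι)
    (f : ι → α) (hp : ∀ i ∈ s, Prime (f i))
    (hnd : ∀ i ∈ s, ∀ j ∈ s, i ≠ j → ¬ f i ∣ f j)
    (x : α) (h : ∀ i ∈ s, f i ∣ x) : (∏ i ∈ s, f i) ∣ x := by
  classical
  induction s using Finset.induction_on generalizing x with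
  | empty => simp
  | insert a s ha ih =>
      obtain ⟨y, hy⟩ := h a (Finset.mem_insert_self a s)
      have hy' : ∀ i ∈ s, f i ∣ y := by
        intro i hi
        have hip := hp i (Finset.mem_insert_of_mem hi)
        have hdv : f i ∣ f a * y := hy ▸ h i (Finset.mem_insert_of_mem hi)
        rcases hip.2.2 _ _ hdv with h' | h'
        · exact absurd h' (hnd i (Finset.mem_insert_of_mem hi) a (Finset.mem_insert_self a s)
            (fun he => ha (he ▸ hi)))
        · exact h'
      rw [Finset.prod_insert ha, hy]
      exact mul_dvd_mul_left _ (ih (fun i hi => hp i (Finset.mem_insert_of_mem hi))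
        (fun i hi j hj => hnd i (Finset.mem_insert_of_mem hi) j (Finset.mem_insert_of_mem hj))
        y (fun i hi => hy' i hi))

private lemma prod_pairs {n : ℕ} {M : Type*} [CommMonoid M] (f : Fin n → Fin n → M) :
    ∏ p ∈ Finset.univ.filter (fun p : Fin n × Fin n => p.1 < p.2), f p.1 p.2
      = ∏ i : Fin n, ∏ j ∈ Finset.Ioi i, f i j := by
  rw [Finset.prod_sigma']
  symm
  apply Finset.prod_nbij (fun x : (_ : Fin n) × Fin n => (x.1, x.2))
  · rintro ⟨i, j⟩ hij
    simp only [Finset.mem_sigma, Finset.mem_Ioi] at hij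
    simp [hij.2]
  · rintro ⟨i, j⟩ hij ⟨i', j'⟩ hij' h
    simp only [Set.mem_setOf_eq, Prod.mk.injEq] at h ⊢
    exact Sigma.ext h.1 (heq_of_eq h.2)
  · rintro ⟨i, j⟩ hij
    simp only [Finset.coe_filter, Set.mem_setOf_eq, Finset.mem_univ, true_and] at hij
    exact ⟨⟨i, j⟩, by simp [hij], rfl⟩
  · rintro ⟨i, j⟩ hij
    rfl

private lemma rename_vdm {n : ℕ} (τ : Equiv.Perm (Fin n)) :
    rename (⇑τ) (∏ p ∈ Finset.univ.filter (fun p : Fin n × Fin n => p.1 < p.2),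
        (X p.2 - X p.1 : MvPolynomial (Fin n) ℚ))
      = (Equiv.Perm.sign τ : ℤ) • ∏ p ∈ Finset.univ.filter (fun p : Fin n × Fin n => p.1 < p.2),
          (X p.2 - X p.1 : MvPolynomial (Fin n) ℚ) := by
  have h2 : Matrix.vandermonde (fun i => (X (τ i) : MvPolynomial (Fin n) ℚ))
      = (Matrix.vandermonde (fun i => (X i : MvPolynomial (Fin n) ℚ))).submatrix (⇑τ) id := by
    ext i j
    simp [Matrix.vandermonde]
  calc rename (⇑τ) (∏ p ∈ Finset.univ.filter (fun p : Fin n × Fin n => p.1 < p.2),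
        (X p.2 - X p.1 : MvPolynomial (Fin n) ℚ))
      = ∏ p ∈ Finset.univ.filter (fun p : Fin n × Fin n => p.1 < p.2),
          (X (τ p.2) - X (τ p.1) : MvPolynomial (Fin n) ℚ) := by
        rw [map_prod]; simp
    _ = Matrix.det (Matrix.vandermonde (fun i => (X (τ i) : MvPolynomial (Fin n) ℚ))) := by
        rw [Matrix.det_vandermonde, prod_pairs (fun i j => (X (τ j) - X (τ i)))]
    _ = (Equiv.Perm.sign τ : ℤ) • ∏ p ∈ Finset.univ.filter (fun p : Fin n × Fin n => p.1 < p.2),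
          (X p.2 - X p.1 : MvPolynomial (Fin n) ℚ) := by
        rw [h2, Matrix.det_permute, Matrix.det_vandermonde,
          ← prod_pairs (fun i j => (X j - X i : MvPolynomial (Fin n) ℚ)), zsmul_eq_mul]

private lemma rename_alt {n : ℕ} (P : MvPolynomial (Fin n) ℚ) (τ : Equiv.Perm (Fin n)) :
    rename (⇑τ) (∑ σ : Equiv.Perm (Fin n), (Equiv.Perm.sign σ : ℤ) • rename (⇑σ) P)
      = (Equiv.Perm.sign τ : ℤ) •
        ∑ σ : Equiv.Perm (Fin n), (Equiv.Perm.sign σ : ℤ) • rename (⇑σ) P := by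
  rw [map_sum, Finset.smul_sum]
  refine Fintype.sum_equiv (Equiv.mulLeft τ) _ _ ?_
  intro σ
  simp only [Equiv.coe_mulLeft]
  rw [map_zsmul, rename_rename]
  have hcoe : (⇑τ ∘ ⇑σ) = ⇑(τ * σ) := rfl
  rw [hcoe, smul_smul]
  congr 1
  rw [Equiv.Perm.sign_mul]
  have h1 : ((Equiv.Perm.sign τ : ℤ)) * (Equiv.Perm.sign τ : ℤ) = 1 := by
    rcases Int.units_eq_one_or (Equiv.Perm.sign τ) with h | h <;> rw [h] <;> norm_num
  push_cast
  rw [← mul_assoc, h1, one_mul]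
private lemma primeXsub' {n : ℕ} {a b : Fin n} (hab : a ≠ b) :
    Prime (X b - X a : MvPolynomial (Fin n) ℚ) := by
  cases n with
  | zero => exact a.elim0
  | succ m => exact primeXsub hab

/-- The Brion/localization push-forward formula (full flag case): for any polynomial `P` in
`y₁, …, y_n`, the symmetrization `∑_{σ ∈ Sₙ} σ · (P / ∏_{j<j'} (y_{j'} - y_j))` is a
symmetric polynomial; equivalently, the Vandermonde determinant `Δ = ∏_{j<j'} (y_{j'} - y_j)`
divides the alternating sum `∑_σ sign(σ) · σP`, with symmetric quotient. -/
theorem symmetrized_vandermonde_quotient_is_symmetric_polynomial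
    (n : ℕ) (P : MvPolynomial (Fin n) ℚ) :
    ∃ Q : MvPolynomial (Fin n) ℚ, Q.IsSymmetric ∧
      (∑ σ : Equiv.Perm (Fin n), (Equiv.Perm.sign σ : ℤ) • rename (⇑σ) P) =
        (∏ p ∈ Finset.univ.filter (fun p : Fin n × Fin n => p.1 < p.2),
          (X p.2 - X p.1)) * Q := by
  classical
  set Δ : MvPolynomial (Fin n) ℚ :=
    ∏ p ∈ Finset.univ.filter (fun p : Fin n × Fin n => p.1 < p.2), (X p.2 - X p.1) with hΔdef
  set A : MvPolynomial (Fin n) ℚ :=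
    ∑ σ : Equiv.Perm (Fin n), (Equiv.Perm.sign σ : ℤ) • rename (⇑σ) P with hAdef
  have hdvd : ∀ p ∈ Finset.univ.filter (fun p : Fin n × Fin n => p.1 < p.2),
      (X p.2 - X p.1 : MvPolynomial (Fin n) ℚ) ∣ A := by
    intro p hp
    have hlt : p.1 < p.2 := (Finset.mem_filter.mp hp).2
    have hne : p.1 ≠ p.2 := hlt.ne
    set s : Fin n → MvPolynomial (Fin n) ℚ := fun k => if k = p.1 then X p.2 else X k with hs
    have hswap : rename (⇑(Equiv.swap p.1 p.2)) A = -A := by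
      rw [hAdef, rename_alt, Equiv.Perm.sign_swap hne]
      simp
    have h0 : aeval s A = 0 := by
      have hfun : s ∘ ⇑(Equiv.swap p.1 p.2) = s := by
        funext k
        rcases eq_or_ne k p.1 with rfl | h
        · simp [hs, Function.comp, Equiv.swap_apply_left, if_neg hne.symm]
        · rcases eq_or_ne k p.2 with rfl | h2
          · simp [hs, Function.comp, Equiv.swap_apply_right, if_neg h]
          · simp [hs, Function.comp, Equiv.swap_apply_of_ne_of_ne h h2]
      have h3 : aeval s (rename (⇑(Equiv.swap p.1 p.2)) A) = aeval s A := by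
        rw [aeval_rename, hfun]
      rw [hswap, map_neg] at h3
      have h4 : aeval s A + aeval s A = 0 := by
        nth_rewrite 1 [← h3]
        exact neg_add_cancel _
      rw [← two_mul] at h4
      have h2 : (2 : MvPolynomial (Fin n) ℚ) ≠ 0 := by
        intro hh
        have := congrArg constantCoeff hh
        rw [map_ofNat] at this
        norm_num at this
      rcases mul_eq_zero.mp h4 with h | h
      · exact absurd h h2
      · exact h
    have hd := dvd_sub_aeval hne A
    rw [h0, sub_zero] at hd
    exact hd
  have hprimes : ∀ p ∈ Finset.univ.filter (fun p : Fin n × Fin n => p.1 < p.2),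
      Prime (X p.2 - X p.1 : MvPolynomial (Fin n) ℚ) := by
    intro p hp
    exact primeXsub' (Finset.mem_filter.mp hp).2.ne
  have hnd : ∀ p ∈ Finset.univ.filter (fun p : Fin n × Fin n => p.1 < p.2),
      ∀ q ∈ Finset.univ.filter (fun p : Fin n × Fin n => p.1 < p.2), p ≠ q →
      ¬ ((X p.2 - X p.1 : MvPolynomial (Fin n) ℚ) ∣ (X q.2 - X q.1)) := by
    intro p hp q hq hpq
    refine notdvd (Finset.mem_filter.mp hp).2 (Finset.mem_filter.mp hq).2 ?_
    intro h
    apply hpq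
    rw [Prod.mk.injEq] at h
    exact Prod.ext h.1 h.2
  obtain ⟨Q, hQ⟩ := prod_primes_dvd' _ _ hprimes hnd A hdvd
  refine ⟨Q, ?_, hQ⟩
  intro τ
  have hΔ0 : Δ ≠ 0 := by
    rw [hΔdef]
    rw [Finset.prod_ne_zero_iff]
    intro p hp
    exact sub_ne_zero.mpr fun h => (Finset.mem_filter.mp hp).2.ne' (X_injective h)
  have h1 := rename_alt P τ
  rw [← hAdef, hQ, map_mul, ← hΔdef, rename_vdm, ← hΔdef] at h1
  rcases Int.units_eq_one_or (Equiv.Perm.sign τ) with hs1 | hs1 <;> rw [hs1] at h1 <;>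
    simp only [Units.val_one, Units.val_neg, one_smul, neg_smul, neg_mul, neg_inj] at h1
  · exact mul_left_cancel₀ hΔ0 h1
  · exact mul_left_cancel₀ hΔ0 h1
end
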